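/- Let N ≥ 2, let G = (g_1,…,g_N) be a K-dual of F = (f_1,…,f_N), and suppose: (i) each ⟨g_i, f_i⟩ is a nonnegative real number, and (ii) there is a real constant c < 0 with ⟨g_i, f_j⟩⟨g_j, f_i⟩ = c for all i ≠ j. Set r₁ = max_{1≤i≤N} ⟨g_i, f_i⟩, Δ = { i : ⟨g_i, f_i⟩ = r₁ }, and r₂ = max_{i≠j} ρ(T_{ij}), where T_{ij} f = ⟨f, g_i⟩ f_i + ⟨f, g_j⟩ f_j and ρ denotes the spectral radius. If Δ contains more than one element, then r₂ = √( r₁² − c ). -/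

import Mathlib

local notation "⟪" x ", " y "⟫" => @inner ℂ _ _ x y

/-- The spectral radius of an operator `T` on a finite-dimensional complex inner product
space: the maximum of `|λ|` over the spectrum of `T` over `ℂ`. -/
noncomputable def specRad {H : Type*} [NormedAddCommGroup H] [InnerProductSpace ℂ H]
    (T : H →L[ℂ] H) : ℝ :=
  ⨆ lam ∈ spectrum ℂ T, ‖lam‖

/-- The two-erasure error operator `T_{ij} f = ⟨f, g_i⟩ f_i + ⟨f, g_j⟩ f_j`
(the paper's `⟨f, g⟩` is linear in the first slot, i.e. Mathlib's `⟪g, f⟫`). -/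
noncomputable def erasureOp {H : Type*} [NormedAddCommGroup H] [InnerProductSpace ℂ H]
    (fi fj gi gj : H) : H →L[ℂ] H :=
  (innerSL ℂ gi).smulRight fi + (innerSL ℂ gj).smulRight fj

/-- Let `N ≥ 2` and `G` a `K`-dual of `F` with each `⟨g_i, f_i⟩` a nonnegative
real and `⟨g_i, f_j⟩⟨g_j, f_i⟩ = c < 0` for all `i ≠ j`.  With `r₁ = max_i ⟨g_i, f_i⟩`,
`Δ` the set of maximizing indices and `r₂ = max_{i≠j} ρ(T_{ij})`:
if `Δ` has more than one element then `r₂ = √(r₁² − c)`. -/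
lemma key_bound {u v aa d c r : ℝ} (ha0 : 0 ≤ aa) (har : aa ≤ r) (hd0 : 0 ≤ d) (hdr : d ≤ r)
    (hc : c < 0)
    (h1 : (u - aa) * (u - d) - v * v = c) (h2 : (u - aa) * v + v * (u - d) = 0) :
    u ^ 2 + v ^ 2 ≤ r ^ 2 - c := by
  rcases eq_or_ne v 0 with hv | hv
  · subst hv
    have h3 : (u - aa) * (u - d) = c := by linarith
    have hur : u ≤ r := by nlinarith
    have hu0 : 0 ≤ u := by nlinarith
    nlinarith
  · have hu : u = (aa + d) / 2 := by
      have h4 : ((u - aa) + (u - d)) * v = 0 := by ring_nf; linarith [h2]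
      rcases mul_eq_zero.mp h4 with h | h
      · linarith
      · exact absurd h hv
    have had : aa * d ≤ r ^ 2 := by nlinarith
    nlinarith [h1, hu]

lemma exists_eig {H : Type*} [NormedAddCommGroup H] [InnerProductSpace ℂ H]
    [FiniteDimensional ℂ H] (T : H →L[ℂ] H) {lam : ℂ} (h : lam ∈ spectrum ℂ T) :
    ∃ v : H, v ≠ 0 ∧ T v = lam • v := by
  by_contra hcon
  push_neg at hcon
  rw [spectrum.mem_iff] at h
  apply h
  rw [ContinuousLinearMap.isUnit_iff_bijective]
  set S := algebraMap ℂ (H →L[ℂ] H) lam - T with hS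
  have hker : ∀ w : H, S w = 0 → w = 0 := by
    intro w hw
    by_contra hw0
    apply hcon w hw0
    have : lam • w - T w = 0 := by
      simpa [hS, Algebra.algebraMap_eq_smul_one] using hw
    exact (sub_eq_zero.mp this).symm
  have hinj : Function.Injective S := by
    intro w1 w2 hw
    exact sub_eq_zero.mp (hker (w1 - w2) (by simp [map_sub, hw]))
  exact ⟨hinj, (LinearMap.injective_iff_surjective (f := (S : H →ₗ[ℂ] H))).mp hinj⟩

lemma mem_spec_of_eig {H : Type*} [NormedAddCommGroup H] [InnerProductSpace ℂ H]
    [FiniteDimensional ℂ H] (T : H →L[ℂ] H) {lam : ℂ} {v : H} (hv : v ≠ 0)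
    (hT : T v = lam • v) : lam ∈ spectrum ℂ T := by
  rw [spectrum.mem_iff]
  intro hu
  have hb := ContinuousLinearMap.isUnit_iff_bijective.mp hu
  have h0 : (algebraMap ℂ (H →L[ℂ] H) lam - T) v = 0 := by
    simp [Algebra.algebraMap_eq_smul_one, hT]
  exact hv (hb.injective (by simp [h0]))

theorem stmt18
    {H : Type*} [NormedAddCommGroup H] [InnerProductSpace ℂ H] [FiniteDimensional ℂ H]
    (hdim : 1 ≤ Module.finrank ℂ H)
    {N : ℕ} (hN : 2 ≤ N)
    (K : H →L[ℂ] H)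
    (F G : Fin N → H)
    (hdual : ∀ f : H, K f = ∑ i, ⟪G i, f⟫ • F i)
    (hpos : ∀ i, (⟪F i, G i⟫).im = 0 ∧ 0 ≤ (⟪F i, G i⟫).re)
    (c : ℝ) (hc : c < 0)
    (huni : ∀ i j, i ≠ j → ⟪F j, G i⟫ * ⟪F i, G j⟫ = (c : ℂ))
    (r₁ : ℝ) (hr₁ : r₁ = ⨆ i, (⟪F i, G i⟫).re)
    (r₂ : ℝ) (hr₂ : r₂ = ⨆ p : {p : Fin N × Fin N // p.1 ≠ p.2},
      specRad (erasureOp (F p.1.1) (F p.1.2) (G p.1.1) (G p.1.2)))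
    (hΔ : ∃ k l : Fin N, k ≠ l ∧ (⟪F k, G k⟫).re = r₁ ∧ (⟪F l, G l⟫).re = r₁) :
    r₂ = Real.sqrt (r₁ ^ 2 - c) := by
  obtain ⟨k, l, hkl, hk, hl⟩ := hΔ
  set a : Fin N → ℝ := fun i => (⟪F i, G i⟫).re with ha
  have hGF : ∀ i, ⟪G i, F i⟫ = ((a i : ℝ) : ℂ) := by
    intro i
    rw [← inner_conj_symm (G i) (F i)]
    apply Complex.ext
    · simp only [Complex.conj_re, Complex.ofReal_re]; rfl
    · simp only [Complex.conj_im, (hpos i).1, Complex.ofReal_im, neg_zero]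
  have hcross : ∀ i j, i ≠ j → ⟪G i, F j⟫ * ⟪G j, F i⟫ = (c : ℂ) := by
    intro i j hij
    rw [← inner_conj_symm (G i) (F j), ← inner_conj_symm (G j) (F i), ← map_mul,
      huni i j hij]
    simp
  have ha0 : ∀ i, 0 ≤ a i := fun i => (hpos i).2
  have har : ∀ i, a i ≤ r₁ := by
    intro i
    rw [hr₁]
    exact le_ciSup (Set.Finite.bddAbove (Set.finite_range _)) i
  have hr₁0 : 0 ≤ r₁ := (ha0 k).trans (har k)
  set B := Real.sqrt (r₁ ^ 2 - c) with hB
  have hB0 : 0 ≤ B := Real.sqrt_nonneg _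
  -- pointwise spectral bound
  have habs : ∀ (i j : Fin N), i ≠ j → ∀ lam ∈ spectrum ℂ (erasureOp (F i) (F j) (G i) (G j)),
      ‖lam‖ ≤ B := by
    intro i j hij lam hmem
    obtain ⟨v, hv, hTv⟩ := exists_eig _ hmem
    have hTv' : ⟪G i, v⟫ • F i + ⟪G j, v⟫ • F j = lam • v := by
      rw [← hTv]
      simp [erasureOp]
    have hx : lam * ⟪G i, v⟫ = ((a i : ℝ) : ℂ) * ⟪G i, v⟫ + ⟪G i, F j⟫ * ⟪G j, v⟫ := by
      have h := congrArg (fun w => ⟪G i, w⟫) hTv'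
      simp only [inner_add_right, inner_smul_right, hGF i] at h
      rw [← h]; ring
    have hy : lam * ⟪G j, v⟫ = ⟪G j, F i⟫ * ⟪G i, v⟫ + ((a j : ℝ) : ℂ) * ⟪G j, v⟫ := by
      have h := congrArg (fun w => ⟪G j, w⟫) hTv'
      simp only [inner_add_right, inner_smul_right, hGF j] at h
      rw [← h]; ring
    by_cases hxy : ⟪G i, v⟫ = 0 ∧ ⟪G j, v⟫ = 0
    · have h0 : lam • v = 0 := by rw [← hTv', hxy.1, hxy.2]; simp
      rcases smul_eq_zero.mp h0 with h | h
      · simpa [h] using hB0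
      · exact absurd h hv
    · have hbc := hcross i j hij
      have h1 : (lam - ((a i : ℝ) : ℂ)) * ⟪G i, v⟫ = ⟪G i, F j⟫ * ⟪G j, v⟫ := by
        linear_combination hx
      have h2 : (lam - ((a j : ℝ) : ℂ)) * ⟪G j, v⟫ = ⟪G j, F i⟫ * ⟪G i, v⟫ := by
        linear_combination hy
      have hquad : (lam - ((a i : ℝ) : ℂ)) * (lam - ((a j : ℝ) : ℂ)) = (c : ℂ) := by
        rcases not_and_or.mp hxy with hx0 | hy0
        · apply mul_right_cancel₀ hx0
          linear_combination (lam - ((a j : ℝ) : ℂ)) * h1 + ⟪G i, F j⟫ * h2 + ⟪G i, v⟫ * hbc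
        · apply mul_right_cancel₀ hy0
          linear_combination (lam - ((a i : ℝ) : ℂ)) * h2 + ⟪G j, F i⟫ * h1 + ⟪G j, v⟫ * hbc
      have hre : (lam.re - a i) * (lam.re - a j) - lam.im * lam.im = c := by
        have := congrArg Complex.re hquad
        simpa [Complex.mul_re] using this
      have him : (lam.re - a i) * lam.im + lam.im * (lam.re - a j) = 0 := by
        have := congrArg Complex.im hquad
        simpa [Complex.mul_im] using this
      have hkey := key_bound (ha0 i) (har i) (ha0 j) (har j) hc hre him
      calc ‖lam‖ = Real.sqrt (lam.re ^ 2 + lam.im ^ 2) := by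
            rw [Complex.norm_def, Complex.normSq_apply]; ring_nf
        _ ≤ B := Real.sqrt_le_sqrt hkey
  have hspecle : ∀ (i j : Fin N), i ≠ j →
      specRad (erasureOp (F i) (F j) (G i) (G j)) ≤ B := by
    intro i j hij
    apply Real.iSup_le _ hB0
    intro lam
    exact Real.iSup_le (fun hmem => habs i j hij lam hmem) hB0
  -- the extremal pair
  set μ : ℂ := (Real.sqrt (-c) : ℝ) * Complex.I with hμ
  have hμ2 : μ ^ 2 = (c : ℂ) := by
    have hsq : Real.sqrt (-c) ^ 2 = -c := Real.sq_sqrt (by linarith)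
    rw [hμ, mul_pow, Complex.I_sq, ← Complex.ofReal_pow, hsq]
    push_cast
    ring
  set lam₀ : ℂ := (r₁ : ℂ) + μ with hlam₀
  have hμim : μ.im = Real.sqrt (-c) := by simp [hμ]
  have hμre : μ.re = 0 := by simp [hμ]
  have hsqpos : 0 < Real.sqrt (-c) := Real.sqrt_pos.mpr (by linarith)
  have hlam0ne : lam₀ ≠ 0 := by
    intro h
    have : lam₀.im = 0 := by rw [h]; simp
    rw [hlam₀] at this
    simp [hμim] at this
    linarith
  have hβγ : ⟪G k, F l⟫ * ⟪G l, F k⟫ = (c : ℂ) := hcross k l hkl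
  have hβne : ⟪G k, F l⟫ ≠ 0 := by
    intro h
    rw [h, zero_mul] at hβγ
    exact (by exact_mod_cast hc.ne : (c : ℂ) ≠ 0) hβγ.symm
  set v : H := ⟪G k, F l⟫ • F k + μ • F l with hv
  have hak : ⟪G k, F k⟫ = (r₁ : ℂ) := by rw [hGF k]; norm_cast
  have hal : ⟪G l, F l⟫ = (r₁ : ℂ) := by rw [hGF l]; norm_cast
  have hGkv : ⟪G k, v⟫ = lam₀ * ⟪G k, F l⟫ := by
    rw [hv]
    simp only [inner_add_right, inner_smul_right, hak]
    rw [hlam₀]; ring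
  have hGlv : ⟪G l, v⟫ = lam₀ * μ := by
    rw [hv]
    simp only [inner_add_right, inner_smul_right, hal]
    rw [hlam₀]
    linear_combination hβγ - hμ2
  have hvne : v ≠ 0 := by
    intro h
    have : ⟪G k, v⟫ = (0 : ℂ) := by rw [h]; simp
    rw [hGkv] at this
    rcases mul_eq_zero.mp this with h' | h'
    · exact hlam0ne h'
    · exact hβne h'
  have hTv : erasureOp (F k) (F l) (G k) (G l) v = lam₀ • v := by
    have : erasureOp (F k) (F l) (G k) (G l) v = ⟪G k, v⟫ • F k + ⟪G l, v⟫ • F l := by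
      simp [erasureOp]
    rw [this, hGkv, hGlv, hv, smul_add, smul_smul, smul_smul]
  have hmem : lam₀ ∈ spectrum ℂ (erasureOp (F k) (F l) (G k) (G l)) :=
    mem_spec_of_eig _ hvne hTv
  have habs0 : ‖lam₀‖ = B := by
    rw [Complex.norm_def, Complex.normSq_apply, hB]
    have h1 : lam₀.re = r₁ := by rw [hlam₀]; simp [hμre]
    have h2 : lam₀.im = Real.sqrt (-c) := by rw [hlam₀]; simp [hμim]
    rw [h1, h2]
    congr 1
    rw [Real.mul_self_sqrt (by linarith : (0:ℝ) ≤ -c)]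
    ring
  have hklspec : specRad (erasureOp (F k) (F l) (G k) (G l)) = B := by
    refine le_antisymm (hspecle k l hkl) ?_
    have hbdd : BddAbove (Set.range fun lam : ℂ =>
        ⨆ _ : lam ∈ spectrum ℂ (erasureOp (F k) (F l) (G k) (G l)), ‖lam‖) := by
      refine ⟨B, ?_⟩
      rintro x ⟨lam, rfl⟩
      exact Real.iSup_le (fun hm => habs k l hkl lam hm) hB0
    have hle := le_ciSup hbdd lam₀
    rw [ciSup_pos hmem] at hle
    calc B = ‖lam₀‖ := habs0.symm
      _ ≤ _ := hle
  rw [hr₂]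
  refine le_antisymm ?_ ?_
  · apply Real.iSup_le _ hB0
    rintro ⟨⟨i, j⟩, hij⟩
    exact hspecle i j hij
  · have hbdd2 : BddAbove (Set.range fun p : {p : Fin N × Fin N // p.1 ≠ p.2} =>
        specRad (erasureOp (F p.1.1) (F p.1.2) (G p.1.1) (G p.1.2))) :=
      Set.Finite.bddAbove (Set.finite_range _)
    have hle := le_ciSup hbdd2 ⟨(k, l), hkl⟩
    rw [hklspec] at hle
    exact hle
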